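/- Let A be an n×n nonnegative irreducible matrix with spectral radius λ_max and positive left Perron eigenvector v. If βλ_max < γ, then along any solution of the network SIS system x'(t) = β(I - diag(x(t)))Ax(t) - γx(t) with x(t) ∈ [0,1]^n, the function y(t) = v^⊤ x(t) satisfies y(t) ≤ y(0)e^{(βλ_max - γ)t} for all t ≥ 0; in particular y(t) → 0 exponentially. -/

import Mathlib

/-- A nonnegative matrix is irreducible (its digraph is strongly connected). -/
def MatIrreducible {n : ℕ} (A : Matrix (Fin n) (Fin n) ℝ) : Prop :=
  ∀ i j : Fin n, ∃ k : ℕ, 0 < (A ^ k) i j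

/-- If βλ_max < γ, then along any solution of the network SIS system
x' = β(I - diag(x))Ax - γx staying in [0,1]^n, the weighted average y(t) = vᵀx(t)
(v the positive left Perron eigenvector for λ_max) satisfies
y(t) ≤ y(0)·e^{(βλ_max - γ)t} for all t ≥ 0. -/
theorem network_SIS_below_threshold_decay
    {n : ℕ} (A : Matrix (Fin n) (Fin n) ℝ)
    (hA : ∀ i j, 0 ≤ A i j) (hirr : MatIrreducible A)
    (β γ : ℝ) (hβ : 0 < β) (hγ : 0 < γ)
    (lam : ℝ) (v : Fin n → ℝ) (hv : ∀ i, 0 < v i)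
    (heig : ∀ j, ∑ i, v i * A i j = lam * v j)
    (hthr : β * lam < γ)
    (x : ℝ → Fin n → ℝ)
    (hbox : ∀ t : ℝ, 0 ≤ t → ∀ i, x t i ∈ Set.Icc (0:ℝ) 1)
    (hderiv : ∀ t : ℝ, 0 ≤ t → ∀ i,
      HasDerivAt (fun s => x s i)
        (β * (1 - x t i) * (∑ j, A i j * x t j) - γ * x t i) t) :
    ∀ t : ℝ, 0 ≤ t →
      ∑ i, v i * x t i ≤ (∑ i, v i * x 0 i) * Real.exp ((β * lam - γ) * t) := by
  intro T hT
  set K : ℝ := β * lam - γ with hK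
  set y : ℝ → ℝ := fun t => ∑ i, v i * x t i with hy
  -- derivative of y
  have hyderiv : ∀ t : ℝ, 0 ≤ t → HasDerivAt y
      (∑ i, v i * (β * (1 - x t i) * (∑ j, A i j * x t j) - γ * x t i)) t := by
    intro t ht
    exact HasDerivAt.fun_sum fun i _ => (hderiv t ht i).const_mul (v i)
  -- the key differential inequality
  have hDle : ∀ t : ℝ, 0 ≤ t →
      (∑ i, v i * (β * (1 - x t i) * (∑ j, A i j * x t j) - γ * x t i)) ≤ K * y t := by
    intro t ht
    have hsplit : (∑ i, v i * (β * (1 - x t i) * (∑ j, A i j * x t j) - γ * x t i))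
        = (∑ i, v i * (β * (1 - x t i) * (∑ j, A i j * x t j))) - γ * y t := by
      rw [hy, Finset.mul_sum, ← Finset.sum_sub_distrib]
      exact Finset.sum_congr rfl fun i _ => by ring
    have h1 : (∑ i, v i * (β * (1 - x t i) * (∑ j, A i j * x t j)))
        ≤ β * lam * y t := by
      have hstep : ∀ i : Fin n, v i * (β * (1 - x t i) * (∑ j, A i j * x t j))
          ≤ v i * (β * (∑ j, A i j * x t j)) := by
        intro i
        have hx := hbox t ht i
        have hS : 0 ≤ ∑ j, A i j * x t j :=
          Finset.sum_nonneg fun j _ => mul_nonneg (hA i j) (hbox t ht j).1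
        have h0x : 0 ≤ x t i := hx.1
        have h1x : x t i ≤ 1 := hx.2
        have := hv i
        nlinarith [mul_nonneg hβ.le hS, mul_nonneg (mul_nonneg hβ.le h0x) hS]
      calc (∑ i, v i * (β * (1 - x t i) * (∑ j, A i j * x t j)))
          ≤ ∑ i, v i * (β * (∑ j, A i j * x t j)) :=
            Finset.sum_le_sum fun i _ => hstep i
        _ = β * ∑ j, (∑ i, v i * A i j) * x t j := by
            simp only [Finset.mul_sum, Finset.sum_mul]
            rw [Finset.sum_comm]
            exact Finset.sum_congr rfl fun j _ => Finset.sum_congr rfl fun i _ => by ring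
        _ = β * ∑ j, lam * (v j * x t j) := by
            congr 1
            exact Finset.sum_congr rfl fun j _ => by rw [heig j]; ring
        _ = β * lam * y t := by
            rw [hy, ← Finset.mul_sum]; ring
    rw [hsplit, hK]
    linarith
  -- the auxiliary function g
  set g : ℝ → ℝ := fun t => y t * Real.exp (-K * t) with hg
  have hgderiv : ∀ t : ℝ, 0 ≤ t → HasDerivAt g
      ((∑ i, v i * (β * (1 - x t i) * (∑ j, A i j * x t j) - γ * x t i)) * Real.exp (-K * t)
        + y t * (-K * Real.exp (-K * t))) t := by
    intro t ht
    have he : HasDerivAt (fun s : ℝ => Real.exp (-K * s)) (-K * Real.exp (-K * t)) t := by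
      have := (HasDerivAt.exp ((hasDerivAt_id t).const_mul (-K)))
      simpa [mul_comm] using this
    exact (hyderiv t ht).mul he
  have hanti : AntitoneOn g (Set.Icc 0 T) := by
    apply antitoneOn_of_deriv_nonpos (convex_Icc 0 T)
    · intro t htmem
      exact ((hgderiv t htmem.1).continuousAt).continuousWithinAt
    · intro t htmem
      rw [interior_Icc] at htmem
      exact ((hgderiv t htmem.1.le).differentiableAt).differentiableWithinAt
    · intro t htmem
      rw [interior_Icc] at htmem
      have ht : (0:ℝ) ≤ t := htmem.1.le
      rw [(hgderiv t ht).deriv]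
      have hexp : 0 < Real.exp (-K * t) := Real.exp_pos _
      have := hDle t ht
      nlinarith
  have hgle : g T ≤ g 0 := hanti (Set.left_mem_Icc.mpr hT) ⟨hT, le_refl T⟩ hT
  have hg0 : g 0 = y 0 := by simp [hg]
  have hexpT : 0 < Real.exp (-K * T) := Real.exp_pos _
  have key : y T * Real.exp (-K * T) ≤ y 0 := by rw [← hg0]; exact hgle
  have := mul_le_mul_of_nonneg_right key (Real.exp_pos (K * T)).le
  have hrw : Real.exp (-K * T) * Real.exp (K * T) = 1 := by
    rw [← Real.exp_add]; ring_nf; exact Real.exp_zero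
  calc y T = y T * (Real.exp (-K * T) * Real.exp (K * T)) := by rw [hrw]; ring
    _ = y T * Real.exp (-K * T) * Real.exp (K * T) := by ring
    _ ≤ y 0 * Real.exp (K * T) := this
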